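/- Let n ∈ ℕ and define H(s;θ) = ∫_0^{−θ} exp(πi(n+2)(s+t))·G_n(s+t) dt. For every θ with 0 ≤ θ ≤ 1/2 and every s with θ − 1/2 ≤ s < 0, one has |Re H(s;θ)| ≤ θ/2 + (1/(4(2n+3)))·(1/2 + 1/π)·( 1/(−s) + 1/(θ−s) ). -/

import Mathlib

open scoped Classical

/-- `G_n(x) = sin((n+1)πx)/sin(πx)` for `x ∉ ℤ`, continuously extended by `G_n(x) = n+1`
for `x ∈ ℤ`. -/
noncomputable def G (n : ℕ) (x : ℝ) : ℝ :=
  if ∃ m : ℤ, x = (m : ℝ) then (n : ℝ) + 1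
  else Real.sin (((n : ℝ) + 1) * Real.pi * x) / Real.sin (Real.pi * x)

/-- `H(s;θ) = ∫_0^{−θ} e^{πi(n+2)(s+t)} G_n(s+t) dt`. -/
noncomputable def Hfun (n : ℕ) (s θ : ℝ) : ℂ :=
  ∫ t in (0 : ℝ)..(-θ),
    Complex.exp ((Real.pi : ℂ) * Complex.I * ((n : ℂ) + 2) * ((s : ℂ) + (t : ℂ))) *
      Complex.ofReal (G n (s + t))

open Real MeasureTheory intervalIntegral

open Real MeasureTheory intervalIntegral

-- basic sine bound on [-1/2, 0)
private lemma sin_pi_le' {x : ℝ} (h1 : -(2:ℝ)⁻¹ ≤ x) (h2 : x < 0) :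
    Real.sin (Real.pi * x) ≤ 2 * x := by
  have hπ := Real.pi_pos
  have h := Real.mul_le_sin (x := Real.pi * (-x)) (by nlinarith) (by nlinarith)
  have he : 2 / Real.pi * (Real.pi * (-x)) = 2 * (-x) := by field_simp
  have hs : Real.sin (Real.pi * (-x)) = - Real.sin (Real.pi * x) := by
    rw [mul_neg, Real.sin_neg]
  rw [he, hs] at h
  linarith

private lemma sin_pi_ne' {x : ℝ} (h1 : -(2:ℝ)⁻¹ ≤ x) (h2 : x < 0) :
    Real.sin (Real.pi * x) ≠ 0 := by
  have := sin_pi_le' h1 h2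
  nlinarith

private lemma abs_sin_pi_ge' {x : ℝ} (h1 : -(2:ℝ)⁻¹ ≤ x) (h2 : x < 0) :
    2 * (-x) ≤ |Real.sin (Real.pi * x)| := by
  have := sin_pi_le' h1 h2
  rw [abs_of_nonpos (by nlinarith)]
  linarith

private lemma G_eq' {n : ℕ} {x : ℝ} (h1 : -(2:ℝ)⁻¹ ≤ x) (h2 : x < 0) :
    G n x = Real.sin (((n : ℝ) + 1) * Real.pi * x) / Real.sin (Real.pi * x) := by
  rw [G, if_neg]
  rintro ⟨m, rfl⟩
  have hm : m < 0 := by exact_mod_cast h2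
  have hm1 : (m : ℝ) ≤ -1 := by exact_mod_cast (show m ≤ -1 by omega)
  linarith

private lemma re_integrand' {n : ℕ} {x : ℝ} (h1 : -(2:ℝ)⁻¹ ≤ x) (h2 : x < 0) :
    (Complex.exp ((Real.pi : ℂ) * Complex.I * ((n : ℂ) + 2) * (x : ℂ)) *
        Complex.ofReal (G n x)).re
      = Real.sin ((2 * (n:ℝ) + 3) * Real.pi * x) / (2 * Real.sin (Real.pi * x)) - 1/2 := by
  have hsin := sin_pi_ne' h1 h2
  have harg : (Real.pi : ℂ) * Complex.I * ((n : ℂ) + 2) * (x : ℂ)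
      = ((((n:ℝ) + 2) * Real.pi * x : ℝ) : ℂ) * Complex.I := by push_cast; ring
  rw [harg, G_eq' h1 h2]
  rw [show (Complex.exp ((((((n:ℝ) + 2) * Real.pi * x : ℝ)) : ℂ) * Complex.I) *
      Complex.ofReal (Real.sin (((n : ℝ) + 1) * Real.pi * x) / Real.sin (Real.pi * x))).re
      = Real.cos (((n:ℝ) + 2) * Real.pi * x) *
        (Real.sin (((n : ℝ) + 1) * Real.pi * x) / Real.sin (Real.pi * x)) by
    simp only [Complex.mul_re, Complex.ofReal_re, Complex.ofReal_im, mul_zero, sub_zero,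
      Complex.exp_ofReal_mul_I_re]]
  have key : Real.sin ((2 * (n:ℝ) + 3) * Real.pi * x)
      = 2 * Real.cos (((n:ℝ) + 2) * Real.pi * x) * Real.sin (((n:ℝ) + 1) * Real.pi * x)
        + Real.sin (Real.pi * x) := by
    have e1 : (2 * (n:ℝ) + 3) * Real.pi * x
        = ((n:ℝ) + 1) * Real.pi * x + ((n:ℝ) + 2) * Real.pi * x := by ring
    have e2 : Real.pi * x = ((n:ℝ) + 2) * Real.pi * x - ((n:ℝ) + 1) * Real.pi * x := by ring
    rw [e1, Real.sin_add]
    rw [e2, Real.sin_sub]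
    ring
  rw [key]
  field_simp
  ring

set_option maxHeartbeats 1000000 in
private lemma osc_bound' (N a b : ℝ) (hN : 1 ≤ N) (ha : -(2:ℝ)⁻¹ ≤ a) (hab : a ≤ b)
    (hb : b < 0) :
    |∫ x in a..b, Real.sin (N * Real.pi * x) / (2 * Real.sin (Real.pi * x))| ≤
      1 / (4 * N) * (1 / 2 + 1 / Real.pi) * (1 / (-a) + 1 / (-b)) := by
  have hπ := Real.pi_pos
  have hN0 : (0:ℝ) < N := by linarith
  have hNπ : N * Real.pi ≠ 0 := by positivity
  have hreg : ∀ x ∈ Set.uIcc a b, -(2:ℝ)⁻¹ ≤ x ∧ x < 0 := by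
    intro x hx
    rw [Set.uIcc_of_le hab] at hx
    exact ⟨le_trans ha hx.1, lt_of_le_of_lt hx.2 hb⟩
  set u : ℝ → ℝ := fun x => (2 * Real.sin (Real.pi * x))⁻¹ with hu_def
  set u' : ℝ → ℝ := fun x =>
    -(2 * (Real.cos (Real.pi * x) * Real.pi)) / (2 * Real.sin (Real.pi * x)) ^ 2
    with hu'_def
  set v : ℝ → ℝ := fun x => -Real.cos (N * Real.pi * x) / (N * Real.pi) with hv_def
  set v' : ℝ → ℝ := fun x => Real.sin (N * Real.pi * x) with hv'_def
  have hu : ∀ x ∈ Set.uIcc a b, HasDerivAt u (u' x) x := by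
    intro x hx
    obtain ⟨h1, h2⟩ := hreg x hx
    have hs := sin_pi_ne' h1 h2
    have hd : HasDerivAt (fun x => 2 * Real.sin (Real.pi * x))
        (2 * (Real.cos (Real.pi * x) * Real.pi)) x := by
      have := (((hasDerivAt_id x).const_mul Real.pi).sin.const_mul 2)
      simp only [id_eq, mul_one] at this
      exact this
    have h2s : (2 : ℝ) * Real.sin (Real.pi * x) ≠ 0 := mul_ne_zero two_ne_zero hs
    exact hd.inv h2s
  have hv : ∀ x ∈ Set.uIcc a b, HasDerivAt v (v' x) x := by
    intro x hx
    have hd0 : HasDerivAt (fun x : ℝ => N * Real.pi * x) (N * Real.pi * 1) x :=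
      (hasDerivAt_id x).const_mul (N * Real.pi)
    have hd := (hd0.cos.neg).div_const (N * Real.pi)
    exact hd.congr_deriv (by
    simp only [hv'_def]
    field_simp)
  have hcont_sin : ∀ x ∈ Set.uIcc a b, Real.sin (Real.pi * x) ≠ 0 := fun x hx =>
    sin_pi_ne' (hreg x hx).1 (hreg x hx).2
  have hu'int : IntervalIntegrable u' volume a b := by
    apply ContinuousOn.intervalIntegrable
    apply ContinuousOn.div
    · fun_prop
    · fun_prop
    · intro x hx
      have := hcont_sin x hx
      positivity
  have hv'int : IntervalIntegrable v' volume a b := by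
    apply Continuous.intervalIntegrable; fun_prop
  have hIBP := intervalIntegral.integral_mul_deriv_eq_deriv_mul hu hv hu'int hv'int
  have hEq : (∫ x in a..b, Real.sin (N * Real.pi * x) / (2 * Real.sin (Real.pi * x)))
      = ∫ x in a..b, u x * v' x := by
    apply intervalIntegral.integral_congr
    intro x hx
    simp only [hu_def, hv'_def]
    rw [div_eq_mul_inv, mul_comm]
  rw [hEq, hIBP]
  -- boundary bounds
  have hbnd : ∀ x, -(2:ℝ)⁻¹ ≤ x → x < 0 → |u x * v x| ≤ 1 / (4 * N * Real.pi) * (1 / (-x)) := by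
    intro x h1 h2
    have hs := abs_sin_pi_ge' h1 h2
    have hx0 : (0:ℝ) < -x := by linarith
    rw [abs_mul]
    have h1u : |u x| ≤ (4 * (-x))⁻¹ := by
      simp only [hu_def, abs_inv, abs_mul, abs_two]
      exact inv_anti₀ (by positivity) (by nlinarith)
    have h1v : |v x| ≤ (N * Real.pi)⁻¹ := by
      have hv1 : |v x| = |Real.cos (N * Real.pi * x)| / (N * Real.pi) := by
        simp only [hv_def]
        rw [abs_div, abs_neg, abs_of_pos (show (0:ℝ) < N * Real.pi by positivity)]
      rw [hv1, div_le_iff₀ (by positivity), inv_mul_cancel₀ hNπ]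
      exact Real.abs_cos_le_one _
    calc |u x| * |v x| ≤ (4 * (-x))⁻¹ * (N * Real.pi)⁻¹ :=
          mul_le_mul h1u h1v (abs_nonneg _) (by positivity)
      _ = 1 / (4 * N * Real.pi) * (1 / (-x)) := by field_simp
  -- integral term bound
  have hint : |∫ x in a..b, u' x * v x| ≤ 1 / (8 * N) * (1 / (-b) - 1 / (-a)) := by
    have hg : ∀ x ∈ Set.Ioc a b, ‖u' x * v x‖ ≤ 1 / (8 * N) * (x ^ 2)⁻¹ := by
      intro x hx
      have h1 : -(2:ℝ)⁻¹ ≤ x := le_trans ha hx.1.le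
      have h2 : x < 0 := lt_of_le_of_lt hx.2 hb
      have hs := abs_sin_pi_ge' h1 h2
      have hx0 : (0:ℝ) < -x := by linarith
      have hx2 : (0:ℝ) < x ^ 2 := by nlinarith
      rw [Real.norm_eq_abs, abs_mul]
      have h16 : 16 * x ^ 2 ≤ (2 * Real.sin (Real.pi * x)) ^ 2 := by
        have hsq : (2 * (-x)) ^ 2 ≤ |Real.sin (Real.pi * x)| ^ 2 := by
          nlinarith [abs_nonneg (Real.sin (Real.pi * x))]
        rw [sq_abs] at hsq
        nlinarith
      have hu'b : |u' x| ≤ Real.pi / (8 * x ^ 2) := by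
        simp only [hu'_def]
        rw [abs_div, abs_neg, abs_pow]
        have h2' : |2 * Real.sin (Real.pi * x)| ^ 2 = (2 * Real.sin (Real.pi * x)) ^ 2 :=
          sq_abs _
        rw [h2', div_le_div_iff₀ (by nlinarith) (by positivity)]
        have hc := Real.abs_cos_le_one (Real.pi * x)
        have habs : |2 * (Real.cos (Real.pi * x) * Real.pi)|
            = 2 * |Real.cos (Real.pi * x)| * Real.pi := by
          rw [abs_mul, abs_mul, abs_two, abs_of_pos hπ, mul_assoc]
        rw [habs]
        nlinarith [abs_nonneg (Real.cos (Real.pi * x)),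
          mul_nonneg (sub_nonneg.2 hc) (le_of_lt hx2)]
      have hvb : |v x| ≤ (N * Real.pi)⁻¹ := by
        have hv1 : |v x| = |Real.cos (N * Real.pi * x)| / (N * Real.pi) := by
          simp only [hv_def]
          rw [abs_div, abs_neg, abs_of_pos (show (0:ℝ) < N * Real.pi by positivity)]
        rw [hv1, div_le_iff₀ (by positivity), inv_mul_cancel₀ hNπ]
        exact Real.abs_cos_le_one _
      calc |u' x| * |v x| ≤ Real.pi / (8 * x ^ 2) * (N * Real.pi)⁻¹ :=
            mul_le_mul hu'b hvb (abs_nonneg _) (by positivity)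
        _ = 1 / (8 * N) * (x ^ 2)⁻¹ := by field_simp
    have hgint : IntervalIntegrable (fun x => 1 / (8 * N) * (x ^ 2)⁻¹) volume a b := by
      apply ContinuousOn.intervalIntegrable
      apply ContinuousOn.mul continuousOn_const
      apply ContinuousOn.inv₀ (by fun_prop)
      intro x hx
      exact pow_ne_zero 2 (hreg x hx).2.ne
    have hle : ‖∫ x in a..b, u' x * v x‖ ≤ |∫ x in a..b, 1 / (8 * N) * (x ^ 2)⁻¹| := by
      refine intervalIntegral.norm_integral_le_abs_of_norm_le ?_ hgint
      rw [Set.uIoc_of_le hab]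
      exact (ae_restrict_iff' measurableSet_Ioc).mpr (Filter.Eventually.of_forall hg)
    have hval : (∫ x in a..b, 1 / (8 * N) * (x ^ 2)⁻¹)
        = 1 / (8 * N) * (1 / (-b) - 1 / (-a)) := by
      have hF : ∀ x ∈ Set.uIcc a b,
          HasDerivAt (fun y : ℝ => -(1 / (8 * N)) * y⁻¹) (1 / (8 * N) * (x ^ 2)⁻¹) x := by
        intro x hx
        have hx0 : x ≠ 0 := (hreg x hx).2.ne
        have := (hasDerivAt_inv hx0).const_mul (-(1 / (8 * N)))
        exact this.congr_deriv (by
        ring)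
      rw [intervalIntegral.integral_eq_sub_of_hasDerivAt hF hgint]
      simp only [div_neg, one_div]
      ring
    rw [Real.norm_eq_abs] at hle
    refine hle.trans ?_
    rw [hval, abs_of_nonneg]
    have h1' : (0:ℝ) < -b := by linarith
    have h2' : (0:ℝ) < -a := by linarith
    have hmono : 1 / (-a) ≤ 1 / (-b) := by
      apply one_div_le_one_div_of_le h1'; linarith
    apply mul_nonneg (by positivity)
    linarith
  -- combine
  have h3 : |u b * v b - u a * v a - ∫ x in a..b, u' x * v x|
      ≤ |u b * v b| + |u a * v a| + |∫ x in a..b, u' x * v x| := by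
    calc |u b * v b - u a * v a - ∫ x in a..b, u' x * v x|
        ≤ |u b * v b - u a * v a| + |∫ x in a..b, u' x * v x| := abs_sub _ _
      _ ≤ |u b * v b| + |u a * v a| + |∫ x in a..b, u' x * v x| := by
          gcongr
          exact abs_sub _ _
  have hbb := hbnd b (le_trans ha hab) hb
  have hba := hbnd a ha (lt_of_le_of_lt hab hb)
  have hA0 : (0:ℝ) ≤ 1 / (-a) := by
    have : (0:ℝ) < -a := by linarith
    positivity
  have hexp : ∀ A B : ℝ, 1 / (4 * N) * (1 / 2 + 1 / Real.pi) * (A + B)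
      = (1 / (4 * N * Real.pi) * B + 1 / (4 * N * Real.pi) * A
          + 1 / (8 * N) * (B - A)) + 1 / (4 * N) * A := by
    intro A B
    field_simp
    ring
  rw [hexp (1 / (-a)) (1 / (-b))]
  have hlast : (0:ℝ) ≤ 1 / (4 * N) * (1 / (-a)) := by positivity
  linarith [h3, hbb, hba, hint]

set_option maxHeartbeats 1000000 in
/-- Bound on the real part of `H(s;θ)` for `0 ≤ θ ≤ 1/2` and `θ − 1/2 ≤ s < 0`:
`|Re H(s;θ)| ≤ θ/2 + (1/(4(2n+3)))(1/2 + 1/π)(1/(−s) + 1/(θ−s))`. -/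
theorem Hfun_re_bound_neg (n : ℕ) (s θ : ℝ)
    (hθ0 : 0 ≤ θ) (hθ1 : θ ≤ 1 / 2) (hs0 : θ - 1 / 2 ≤ s) (hs1 : s < 0) :
    |(Hfun n s θ).re| ≤ θ / 2 +
      (1 / (4 * (2 * (n : ℝ) + 3))) * (1 / 2 + 1 / Real.pi) *
        (1 / (-s) + 1 / (θ - s)) := by
  have hπ := Real.pi_pos
  set N : ℝ := 2 * (n : ℝ) + 3 with hN_def
  have hreg : ∀ t ∈ Set.uIcc (0:ℝ) (-θ), -(2:ℝ)⁻¹ ≤ s + t ∧ s + t < 0 := by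
    intro t ht
    rw [Set.uIcc_comm, Set.uIcc_of_le (by linarith : -θ ≤ 0)] at ht
    constructor
    · have : -θ ≤ t := ht.1
      nlinarith
    · have : t ≤ 0 := ht.2
      linarith
  -- continuity / integrability of the complex integrand
  set f : ℝ → ℂ := fun t =>
    Complex.exp ((Real.pi : ℂ) * Complex.I * ((n : ℂ) + 2) * ((s : ℂ) + (t : ℂ))) *
      Complex.ofReal (G n (s + t)) with hf_def
  have hfc : ContinuousOn f (Set.uIcc (0:ℝ) (-θ)) := by
    apply ContinuousOn.mul
    · apply Continuous.continuousOn
      fun_prop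
    · apply Complex.continuous_ofReal.comp_continuousOn
      apply ContinuousOn.congr
        (f := fun t => Real.sin (((n : ℝ) + 1) * Real.pi * (s + t)) / Real.sin (Real.pi * (s + t)))
      · apply ContinuousOn.div
        · fun_prop
        · fun_prop
        · intro t ht
          exact sin_pi_ne' (hreg t ht).1 (hreg t ht).2
      · intro t ht
        exact G_eq' (hreg t ht).1 (hreg t ht).2
  have hfint : IntervalIntegrable f volume 0 (-θ) := hfc.intervalIntegrable
  -- real part of the integral
  have h1 : (Hfun n s θ).re = ∫ t in (0:ℝ)..(-θ), (f t).re := by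
    rw [Hfun]
    have := (Complex.reCLM).intervalIntegral_comp_comm hfint
    simp only [Complex.reCLM_apply] at this
    exact this.symm
  -- rewrite the integrand
  have h2 : (∫ t in (0:ℝ)..(-θ), (f t).re)
      = ∫ t in (0:ℝ)..(-θ),
          (Real.sin (N * Real.pi * (s + t)) / (2 * Real.sin (Real.pi * (s + t))) - 1/2) := by
    apply intervalIntegral.integral_congr
    intro t ht
    obtain ⟨hr1, hr2⟩ := hreg t ht
    simp only [hf_def]
    rw [show (s:ℂ) + (t:ℂ) = ((s + t : ℝ) : ℂ) by push_cast; ring]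
    rw [re_integrand' hr1 hr2, hN_def]
  -- integrability of the oscillatory part
  have hosc_int : IntervalIntegrable
      (fun t => Real.sin (N * Real.pi * (s + t)) / (2 * Real.sin (Real.pi * (s + t))))
      volume 0 (-θ) := by
    apply ContinuousOn.intervalIntegrable
    apply ContinuousOn.div
    · fun_prop
    · fun_prop
    · intro t ht
      have := sin_pi_ne' (hreg t ht).1 (hreg t ht).2
      intro h
      apply this
      nlinarith [h]
  -- split the integral
  have h3 : (∫ t in (0:ℝ)..(-θ),
        (Real.sin (N * Real.pi * (s + t)) / (2 * Real.sin (Real.pi * (s + t))) - 1/2))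
      = (∫ t in (0:ℝ)..(-θ),
          Real.sin (N * Real.pi * (s + t)) / (2 * Real.sin (Real.pi * (s + t)))) + θ/2 := by
    rw [intervalIntegral.integral_sub hosc_int intervalIntegrable_const,
      intervalIntegral.integral_const]
    simp
    ring
  -- substitution
  have h4 : (∫ t in (0:ℝ)..(-θ),
        Real.sin (N * Real.pi * (s + t)) / (2 * Real.sin (Real.pi * (s + t))))
      = -∫ x in (s - θ)..s, Real.sin (N * Real.pi * x) / (2 * Real.sin (Real.pi * x)) := by
    rw [intervalIntegral.integral_comp_add_left
      (fun x => Real.sin (N * Real.pi * x) / (2 * Real.sin (Real.pi * x))) s]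
    rw [add_zero, show s + -θ = s - θ by ring]
    rw [intervalIntegral.integral_symm]
  have hbound := osc_bound' N (s - θ) s (by simp only [hN_def]; push_cast; nlinarith)
    (by linarith) (by linarith) hs1
  rw [h1, h2, h3, h4]
  have habs : |(-∫ x in (s - θ)..s,
        Real.sin (N * Real.pi * x) / (2 * Real.sin (Real.pi * x))) + θ/2|
      ≤ |∫ x in (s - θ)..s, Real.sin (N * Real.pi * x) / (2 * Real.sin (Real.pi * x))| + θ/2 := by
    refine (abs_add_le _ _).trans ?_
    rw [abs_neg, abs_of_nonneg (by linarith : (0:ℝ) ≤ θ/2)]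
  refine habs.trans ?_
  have he : -(s - θ) = θ - s := by ring
  rw [he] at hbound
  have : (1 : ℝ) / (4 * N) = 1 / (4 * (2 * (n:ℝ) + 3)) := by rw [hN_def]
  rw [this] at hbound
  linarith [hbound]
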